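/- Let A, B₁, B₂ be bounded operators on a complex Hilbert space H. If R(A) ⊆ R(B₁) + R(B₂), then there exist bounded operators C₁, C₂ with A = B₁C₁ + B₂C₂. -/

import Mathlib

open ContinuousLinearMap Pointwise

/-- If `R(A) ⊆ R(B₁) + R(B₂)` then `A = B₁ C₁ + B₂ C₂` for some bounded `C₁, C₂`. -/
theorem range_subset_sum_implies_factorization
    {H : Type*} [NormedAddCommGroup H] [InnerProductSpace ℂ H] [CompleteSpace H]
    (A B₁ B₂ : H →L[ℂ] H) (h : Set.range A ⊆ Set.range B₁ + Set.range B₂) :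
    ∃ C₁ C₂ : H →L[ℂ] H, A = B₁ ∘L C₁ + B₂ ∘L C₂ := by
  classical
  let E := WithLp 2 (H × H)
  let e : E ≃L[ℂ] H × H := WithLp.prodContinuousLinearEquiv 2 ℂ H H
  set B : E →L[ℂ] H := (B₁.coprod B₂).comp (e : E →L[ℂ] H × H) with hB
  set K : Submodule ℂ E := LinearMap.ker (B : E →ₗ[ℂ] H) with hK
  have hKclosed : IsClosed (K : Set E) := ContinuousLinearMap.isClosed_ker B
  haveI : CompleteSpace K := hKclosed.completeSpace_coe
  -- existence of a solution in Kᗮ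
  have hex : ∀ x : H, ∃ y : E, y ∈ Kᗮ ∧ B y = A x := by
    intro x
    obtain ⟨u, ⟨a, rfl⟩, v, ⟨b, rfl⟩, huv⟩ := h (Set.mem_range_self x)
    have hz : B (e.symm (a, b)) = A x := by
      simpa [hB, ContinuousLinearMap.coprod_apply] using huv
    obtain ⟨k, hk, y, hy, hsum⟩ := K.exists_add_mem_mem_orthogonal (e.symm (a, b))
    refine ⟨y, hy, ?_⟩
    have hBk : B k = 0 := hk
    calc B y = B (k + y) - B k := by simp [map_add]
    _ = A x := by rw [← hsum, hBk, sub_zero, hz]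
  -- uniqueness of solutions in Kᗮ
  have huniq : ∀ y₁ y₂ : E, y₁ ∈ Kᗮ → y₂ ∈ Kᗮ → B y₁ = B y₂ → y₁ = y₂ := by
    intro y₁ y₂ h₁ h₂ hBeq
    have hdK : y₁ - y₂ ∈ K := by
      simp only [hK, LinearMap.mem_ker, ContinuousLinearMap.coe_coe, map_sub, hBeq, sub_self]
    have hdO : y₁ - y₂ ∈ Kᗮ := Submodule.sub_mem _ h₁ h₂
    have h0 : y₁ - y₂ = 0 := by
      have := (Submodule.mem_orthogonal K (y₁ - y₂)).mp hdO (y₁ - y₂) hdK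
      exact inner_self_eq_zero.mp this
    exact sub_eq_zero.mp h0
  -- the solution map as a function
  let sol : H → E := fun x => (hex x).choose
  have hsolO : ∀ x, sol x ∈ Kᗮ := fun x => (hex x).choose_spec.1
  have hsolB : ∀ x, B (sol x) = A x := fun x => (hex x).choose_spec.2
  -- linearity
  let C₀ : H →ₗ[ℂ] E :=
    { toFun := sol
      map_add' := fun x y => by
        refine huniq _ _ (hsolO _) (Submodule.add_mem _ (hsolO x) (hsolO y)) ?_
        simp [hsolB, map_add]
      map_smul' := fun c x => by
        refine huniq _ _ (hsolO _) (Submodule.smul_mem _ c (hsolO x)) ?_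
        simp [hsolB, map_smul] }
  -- closed graph
  have hgraph : IsClosed (C₀.graph : Set (H × E)) := by
    have hset : (C₀.graph : Set (H × E))
        = {p : H × E | p.2 ∈ Kᗮ ∧ B p.2 = A p.1} := by
      ext ⟨x, y⟩
      simp only [SetLike.mem_coe, LinearMap.mem_graph_iff, Set.mem_setOf_eq]
      constructor
      · rintro rfl; exact ⟨hsolO x, hsolB x⟩
      · rintro ⟨hy, hBy⟩
        exact huniq _ _ hy (hsolO x) (hBy.trans (hsolB x).symm)
    rw [hset]
    have h1 : IsClosed {p : H × E | p.2 ∈ Kᗮ} :=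
      K.isClosed_orthogonal.preimage continuous_snd
    have h2 : IsClosed {p : H × E | B p.2 = A p.1} :=
      isClosed_eq (B.continuous.comp continuous_snd) (A.continuous.comp continuous_fst)
    exact h1.inter h2
  let C : H →L[ℂ] E := ContinuousLinearMap.ofIsClosedGraph hgraph
  refine ⟨(ContinuousLinearMap.fst ℂ H H).comp ((e : E →L[ℂ] H × H).comp C),
    (ContinuousLinearMap.snd ℂ H H).comp ((e : E →L[ℂ] H × H).comp C), ?_⟩
  ext x
  have : B (C x) = A x := hsolB x
  simpa [hB, ContinuousLinearMap.coprod_apply] using this.symm
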